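/- Let c and e be tripotents in a JB*-triple V. Then c ≤ e if and only if B(e,c)w = 0 for all w in the Peirce 2-space V₂(c), where B(e,c) = I − 2(e □ c) + Q_e Q_c is the Bergman operator. -/

import Mathlib

open scoped ComplexConjugate

class JBStarTriple (V : Type*) [NormedAddCommGroup V] [NormedSpace ℂ V] where
  tp : V → V → V → V
  box : V → V → V →L[ℂ] V
  box_apply : ∀ a b x : V, box a b x = tp a b x
  add_fst : ∀ a a' b c : V, tp (a + a') b c = tp a b c + tp a' b c
  smul_fst : ∀ (α : ℂ) (a b c : V), tp (α • a) b c = α • tp a b c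
  symm_outer : ∀ a b c : V, tp a b c = tp c b a
  add_snd : ∀ a b b' c : V, tp a (b + b') c = tp a b c + tp a b' c
  conj_snd : ∀ (α : ℂ) (a b c : V), tp a (α • b) c = conj α • tp a b c
  jordan_identity : ∀ a b x y z : V,
    tp a b (tp x y z) = tp (tp a b x) y z - tp x (tp b a y) z + tp x y (tp a b z)
  hermitian : ∀ (a : V) (t : ℝ), ‖NormedSpace.exp ((Complex.I * (t : ℂ)) • box a a)‖ = 1
  nonneg_spectrum : ∀ a : V, spectrum ℂ (box a a) ⊆ {z : ℂ | 0 ≤ z.re ∧ z.im = 0}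
  norm_tp_le : ∀ a b c : V, ‖tp a b c‖ ≤ ‖a‖ * ‖b‖ * ‖c‖
  norm_tp_self : ∀ a : V, ‖tp a a a‖ = ‖a‖ ^ 3

namespace JBStarTriple

variable {V : Type*} [NormedAddCommGroup V] [NormedSpace ℂ V] [JBStarTriple V]

def IsTripotent (e : V) : Prop := tp e e e = e

def Orthogonal (a b : V) : Prop := ∀ x : V, tp a b x = 0

def IsMinimalTripotent (e : V) : Prop :=
  IsTripotent e ∧ e ≠ 0 ∧ ∀ v : V, ∃ α : ℂ, tp e v e = α • e

def Peirce2 (e : V) : Set V := {x : V | tp e e x = x}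

/-- `c ≤ e` for tripotents: `e - c` is a tripotent orthogonal to `c`. -/
def TripLE (c e : V) : Prop := IsTripotent (e - c) ∧ Orthogonal (e - c) c

/-- The box operator as a `ℂ`-linear map. -/
def boxL (x y : V) : V →ₗ[ℂ] V where
  toFun v := tp x y v
  map_add' u v := by
    show tp x y (u + v) = tp x y u + tp x y v
    rw [symm_outer x y (u + v), add_fst, ← symm_outer x y u, ← symm_outer x y v]
  map_smul' α v := by
    show tp x y (α • v) = α • tp x y v
    rw [symm_outer x y (α • v), smul_fst, ← symm_outer x y v]

/-- The trace inner product `⟨x, y⟩ = Tr (x □ y)`. -/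
noncomputable def trform (x y : V) : ℂ := LinearMap.trace ℂ V (boxL x y)

end JBStarTriple

open JBStarTriple

section JBTAux

variable {V : Type*} [NormedAddCommGroup V] [NormedSpace ℂ V] [JBStarTriple V]

private lemma tp3_add (a b x y : V) : tp a b (x + y) = tp a b x + tp a b y := by
  rw [symm_outer a b (x + y), add_fst, symm_outer x b a, symm_outer y b a]

private lemma tp3_smul (a b : V) (α : ℂ) (x : V) : tp a b (α • x) = α • tp a b x := by
  rw [symm_outer a b (α • x), smul_fst, symm_outer x b a]

private lemma tp1_zero (b c : V) : tp (0 : V) b c = 0 := by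
  have h := add_fst (0 : V) 0 b c
  rw [add_zero] at h
  exact (add_eq_left.mp h.symm)

private lemma tp2_zero (a c : V) : tp a (0 : V) c = 0 := by
  have h := add_snd a (0 : V) 0 c
  rw [add_zero] at h
  exact (add_eq_left.mp h.symm)

private lemma tp3_zero (a b : V) : tp a b (0 : V) = 0 := by
  rw [symm_outer a b (0 : V), tp1_zero]

private lemma tp1_neg (a b c : V) : tp (-a) b c = - tp a b c := by
  have h := add_fst a (-a) b c
  rw [add_neg_cancel, tp1_zero] at h
  exact (eq_neg_of_add_eq_zero_right h.symm)

private lemma tp2_neg (a b c : V) : tp a (-b) c = - tp a b c := by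
  have h := add_snd a b (-b) c
  rw [add_neg_cancel, tp2_zero] at h
  exact (eq_neg_of_add_eq_zero_right h.symm)

private lemma tp3_neg (a b c : V) : tp a b (-c) = - tp a b c := by
  rw [symm_outer a b (-c), tp1_neg, symm_outer c b a]

private lemma tp1_sub (a a' b c : V) : tp (a - a') b c = tp a b c - tp a' b c := by
  rw [sub_eq_add_neg, add_fst, tp1_neg, sub_eq_add_neg]

private lemma tp2_sub (a b b' c : V) : tp a (b - b') c = tp a b c - tp a b' c := by
  rw [sub_eq_add_neg, add_snd, tp2_neg, sub_eq_add_neg]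

private lemma tp3_sub (a b c c' : V) : tp a b (c - c') = tp a b c - tp a b c' := by
  rw [sub_eq_add_neg, tp3_add, tp3_neg, sub_eq_add_neg]

private lemma tp2_smul_half (a b c : V) : tp a ((2⁻¹ : ℂ) • b) c = (2⁻¹ : ℂ) • tp a b c := by
  rw [conj_snd, map_inv₀, map_ofNat]

private lemma tp2_smul_num (n : ℕ) [n.AtLeastTwo] (a b c : V) :
    tp a ((OfNat.ofNat n : ℂ) • b) c = (OfNat.ofNat n : ℂ) • tp a b c := by
  rw [conj_snd, map_ofNat]

/-- the rearranged Jordan identity, isolating a nested middle factor -/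
private lemma jbt_mid (a b x y z : V) :
    tp x (tp b a y) z = tp (tp a b x) y z + tp x y (tp a b z) - tp a b (tp x y z) := by
  rw [jordan_identity a b x y z]
  abel

/-- anisotropy -/
private lemma jbt_anis (u : V) (h : tp u u u = 0) : u = 0 := by
  have hn := norm_tp_self (V := V) u
  rw [h, norm_zero] at hn
  have : ‖u‖ = 0 := pow_eq_zero_iff (by norm_num) |>.mp hn.symm
  exact norm_eq_zero.mp this

end JBTAux

section JBTAux2

variable {V : Type*} [NormedAddCommGroup V] [NormedSpace ℂ V] [JBStarTriple V]

private lemma jbt_qdA (c : V) (hc : tp c c c = c) (x : V) :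
    tp c (tp c c x) c = (2 : ℂ) • tp c x c - tp c c (tp c x c) := by
  have h := jbt_mid c c c x c
  rw [hc] at h
  rw [h]; module

private lemma jbt_dq (c : V) (hc : tp c c c = c) (x : V) :
    tp c c (tp c x c) = tp c x c := by
  have hA := jbt_qdA c hc x
  have hB := jordan_identity c x c c c
  rw [hc, symm_outer (tp c x c) c c, symm_outer x c c] at hB
  rw [hA] at hB
  -- hB : tp c x c = tp c c (tp c x c) - ((2:ℂ)•tp c x c - tp c c (tp c x c)) + tp c c (tp c x c)
  have key : (3 : ℂ) • tp c c (tp c x c) = (3 : ℂ) • tp c x c := by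
    calc (3 : ℂ) • tp c c (tp c x c)
        = (tp c c (tp c x c) - ((2 : ℂ) • tp c x c - tp c c (tp c x c)) + tp c c (tp c x c))
            + (2 : ℂ) • tp c x c := by module
      _ = tp c x c + (2 : ℂ) • tp c x c := by rw [← hB]
      _ = (3 : ℂ) • tp c x c := by module
  have h30 : (3 : ℂ) • (tp c c (tp c x c) - tp c x c) = 0 := by
    rw [smul_sub, key, sub_self]
  rcases smul_eq_zero.mp h30 with h | h
  · exact absurd h (by norm_num)
  · exact sub_eq_zero.mp h

private lemma jbt_qd (c : V) (hc : tp c c c = c) (x : V) :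
    tp c (tp c c x) c = tp c x c := by
  rw [jbt_qdA c hc x, jbt_dq c hc x]; module

private lemma jbt_qq (c : V) (hc : tp c c c = c) (x : V) :
    tp c (tp c x c) c = (2 : ℂ) • tp c c (tp c c x) - tp c c x := by
  have h := jordan_identity x c c c c
  rw [hc, symm_outer x c c, symm_outer (tp c c x) c c] at h
  -- h : tp c c x = tp c c (tp c c x) - tp c (tp c x c) c + tp c c (tp c c x)
  calc tp c (tp c x c) c
      = (2 : ℂ) • tp c c (tp c c x)
          - (tp c c (tp c c x) - tp c (tp c x c) c + tp c c (tp c c x)) := by module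
    _ = (2 : ℂ) • tp c c (tp c c x) - tp c c x := by rw [← h]

private lemma jbt_cubic (c : V) (hc : tp c c c = c) (x : V) :
    (2 : ℂ) • tp c c (tp c c (tp c c x)) = (3 : ℂ) • tp c c (tp c c x) - tp c c x := by
  have h := jbt_dq c hc (tp c x c)
  -- applies to Qx : D (Q (Q x)) = Q (Q x) with Q Q x = 2 DD x - D x
  rw [jbt_qq c hc x] at h
  rw [tp3_sub, tp3_smul] at h
  -- h : (2:ℂ)•tp c c (tp c c (tp c c x)) - tp c c (tp c c x) = (2:ℂ)•tp c c (tp c c x) - tp c c x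
  calc (2 : ℂ) • tp c c (tp c c (tp c c x))
      = ((2 : ℂ) • tp c c (tp c c (tp c c x)) - tp c c (tp c c x)) + tp c c (tp c c x) := by module
    _ = ((2 : ℂ) • tp c c (tp c c x) - tp c c x) + tp c c (tp c c x) := by rw [h]
    _ = (3 : ℂ) • tp c c (tp c c x) - tp c c x := by module

private lemma jbt_kill (c : V) (hc : tp c c c = c) (μ : ℂ)
    (hμ : 2 * μ ^ 3 - 3 * μ ^ 2 + μ ≠ 0) (x : V) (hx : tp c c x = μ • x) : x = 0 := by
  have h2 : tp c c (tp c c x) = (μ * μ) • x := by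
    rw [hx, tp3_smul, hx, smul_smul]
  have h3 : tp c c (tp c c (tp c c x)) = (μ * μ * μ) • x := by
    rw [h2, tp3_smul, hx, smul_smul]
  have hcb := jbt_cubic c hc x
  rw [h3, h2, hx, smul_smul, smul_smul] at hcb
  have h0 : (2 * μ ^ 3 - 3 * μ ^ 2 + μ) • x = 0 := by
    have : (2 * (μ * μ * μ)) • x - ((3 * (μ * μ)) • x - μ • x) = 0 := by
      rw [hcb]; abel
    calc (2 * μ ^ 3 - 3 * μ ^ 2 + μ) • x
        = (2 * (μ * μ * μ)) • x - ((3 * (μ * μ)) • x - μ • x) := by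
          module
      _ = 0 := this
  rcases smul_eq_zero.mp h0 with h | h
  · exact absurd h hμ
  · exact h

private lemma jbt_sep (c : V) (x2 x1 x0 : V)
    (h2 : tp c c x2 = x2) (h1 : tp c c x1 = (2⁻¹ : ℂ) • x1) (h0 : tp c c x0 = 0)
    (hs : x2 + x1 + x0 = 0) : x2 = 0 ∧ x1 = 0 ∧ x0 = 0 := by
  have d1 : x2 + (2⁻¹ : ℂ) • x1 = 0 := by
    have h := congrArg (fun t => tp c c t) hs
    simp only [tp3_add, h2, h1, h0, tp3_zero, add_zero] at h
    exact h
  have d2 : x2 + ((2⁻¹ : ℂ) * 2⁻¹) • x1 = 0 := by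
    have h := congrArg (fun t => tp c c t) d1
    simp only [tp3_add, tp3_smul, h2, h1, tp3_zero, smul_smul] at h
    exact h
  have hx1 : x1 = 0 := by
    have hd : ((2⁻¹ : ℂ) - (2⁻¹ : ℂ) * 2⁻¹) • x1 = 0 := by
      have := congrArg₂ (fun s t => s - t) d1 d2
      simp only [sub_zero] at this
      rw [sub_smul]
      calc (2⁻¹ : ℂ) • x1 - ((2⁻¹ : ℂ) * 2⁻¹) • x1
          = (x2 + (2⁻¹ : ℂ) • x1) - (x2 + ((2⁻¹ : ℂ) * 2⁻¹) • x1) := by abel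
        _ = 0 := by rw [d1, d2, sub_self]
    rcases smul_eq_zero.mp hd with h | h
    · exact absurd h (by norm_num)
    · exact h
  have hx2 : x2 = 0 := by
    have := d1
    rw [hx1, smul_zero, add_zero] at this
    exact this
  refine ⟨hx2, hx1, ?_⟩
  have := hs
  rw [hx1, hx2, zero_add, zero_add] at this
  exact this

end JBTAux2

section JBTAux3

variable {V : Type*} [NormedAddCommGroup V] [NormedSpace ℂ V] [JBStarTriple V]

private lemma jbt_o1 (c : V) (hc : tp c c c = c) (d : V) (hd : tp c c d = 0) :
    tp c d c = 0 := by
  have hA := jbt_qdA c hc d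
  rw [hd, tp2_zero, jbt_dq c hc d] at hA
  -- hA : 0 = 2 • tp c d c - tp c d c
  have : (0 : V) = tp c d c := by rw [hA]; module
  exact this.symm

private lemma jbt_o2 (c : V) (hc : tp c c c = c) (d : V) (hd : tp c c d = 0) :
    ∀ x, tp d c x = 0 := by
  intro x
  have hq := jbt_o1 c hc d hd
  have J1 := jordan_identity c c d c x
  rw [hd, hc, tp1_zero] at J1
  -- J1 : tp c c (tp d c x) = 0 - tp d c x + tp d c (tp c c x)
  have hdcc : tp d c c = 0 := by rw [symm_outer]; exact hd
  have J2 := jordan_identity d c c c x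
  rw [hdcc, hq, tp1_zero, tp2_zero] at J2
  -- J2 : tp d c (tp c c x) = 0 - 0 + tp c c (tp d c x)
  rw [J2] at J1
  -- J1 : tp c c (tp d c x) = 0 - tp d c x + (0 - 0 + tp c c (tp d c x))
  have key : tp d c x
      = -((0 - tp d c x + (0 - 0 + tp c c (tp d c x))) - tp c c (tp d c x)) := by module
  rw [← J1] at key
  simpa using key

private lemma jbt_o3 (c : V) (hc : tp c c c = c) (d : V) (hd : tp c c d = 0) :
    ∀ x, tp c d x = 0 := by
  intro y
  have ho2 := jbt_o2 c hc d hd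
  have key : ∀ x z : V, tp x (tp c d y) z = 0 := by
    intro x z
    have J := jordan_identity d c x y z
    rw [ho2 (tp x y z), ho2 x, ho2 z, tp1_zero, tp3_zero] at J
    -- J : 0 = 0 - tp x (tp c d y) z + 0
    have key : tp x (tp c d y) z = -(0 - tp x (tp c d y) z + 0) := by module
    rw [← J, neg_zero] at key
    exact key
  exact jbt_anis _ (key (tp c d y) (tp c d y))

private lemma jbt_o4 (c : V) (hc : tp c c c = c) (d : V) (hd : tp c c d = 0) :
    ∀ w z : V, tp c c w = w → tp d w z = 0 := by
  intro w z hw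
  have ho2 := jbt_o2 c hc d hd
  set u := tp c w c with hu_def
  have hqq : tp c u c = w := by
    rw [hu_def, jbt_qq c hc w, hw, hw]; module
  have hm := jbt_mid u c d c z
  -- hm : tp d (tp c u c) z = tp (tp u c d) c z + tp d c (tp u c z) - tp u c (tp d c z)
  rw [hqq] at hm
  rw [symm_outer u c d, ho2 u, tp1_zero, ho2 (tp u c z), ho2 z, tp3_zero] at hm
  simpa using hm
end JBTAux3

section JBTAux4

variable {V : Type*} [NormedAddCommGroup V] [NormedSpace ℂ V] [JBStarTriple V]

private lemma jbt_comp (c e e2 a b : V) (hc : tp c c c = c)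
    (hsum : e = e2 + a + b)
    (hDe2 : tp c c e2 = e2) (hDa : tp c c a = (2⁻¹ : ℂ) • a)
    (hb2 : ∀ x, tp b c x = 0)
    (hb4 : ∀ w z : V, tp c c w = w → tp b w z = 0)
    (w : V) (hw : tp c c w = w)
    (hBw : w - (2 : ℂ) • tp e c w + tp e (tp c w c) e = 0) :
    (w - (2 : ℂ) • tp e2 c w + tp e2 (tp c w c) e2 = 0) ∧ tp a (tp c w c) a = 0 := by
  set u := tp c w c with hu_def
  have hu : tp c c u = u := jbt_dq c hc w
  -- expansion of tp e c w
  have hecw : tp e c w = tp e2 c w + tp a c w := by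
    rw [hsum, add_fst, add_fst, hb2 w, add_zero]
  -- expansion of tp e u e
  have hz1 : tp e2 u b = 0 := by rw [symm_outer e2 u b]; exact hb4 u e2 hu
  have hz2 : tp a u b = 0 := by rw [symm_outer a u b]; exact hb4 u a hu
  have hz3 : ∀ x, tp b u x = 0 := fun x => hb4 u x hu
  have hsym : tp a u e2 = tp e2 u a := symm_outer a u e2
  have heue : tp e u e = tp e2 u e2 + (2 : ℂ) • tp e2 u a + tp a u a := by
    rw [hsum]
    simp only [add_fst, tp3_add]
    rw [hz1, hz2, hz3, hz3, hz3, hsym]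
    module
  -- the three graded components
  have hX2 : tp c c (w - (2 : ℂ) • tp e2 c w + tp e2 u e2)
      = w - (2 : ℂ) • tp e2 c w + tp e2 u e2 := by
    have j1 := jordan_identity c c e2 c w
    rw [hDe2, hc, hw] at j1
    have j1' : tp c c (tp e2 c w) = tp e2 c w := by rw [j1]; module
    have j2 := jordan_identity c c e2 u e2
    rw [hDe2, hu] at j2
    have j2' : tp c c (tp e2 u e2) = tp e2 u e2 := by rw [j2]; module
    rw [tp3_add, tp3_sub, tp3_smul, hw, j1', j2']
  have hX1 : tp c c (-(2 : ℂ) • tp a c w + (2 : ℂ) • tp e2 u a)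
      = (2⁻¹ : ℂ) • (-(2 : ℂ) • tp a c w + (2 : ℂ) • tp e2 u a) := by
    have j1 := jordan_identity c c a c w
    rw [hDa, hc, hw, smul_fst] at j1
    -- j1 : tp c c (tp a c w) = 2⁻¹ • tp a c w - tp a c w + tp a c w
    have j1' : tp c c (tp a c w) = (2⁻¹ : ℂ) • tp a c w := by rw [j1]; module
    have j2 := jordan_identity c c e2 u a
    rw [hDe2, hu, hDa, tp3_smul] at j2
    have j2' : tp c c (tp e2 u a) = (2⁻¹ : ℂ) • tp e2 u a := by rw [j2]; module
    rw [tp3_add, tp3_smul, tp3_smul, j1', j2']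
    module
  have hX0 : tp c c (tp a u a) = 0 := by
    have j1 := jordan_identity c c a u a
    rw [hDa, hu, smul_fst, tp3_smul] at j1
    rw [j1]; module
  -- assemble
  have hsplit : (w - (2 : ℂ) • tp e2 c w + tp e2 u e2)
      + (-(2 : ℂ) • tp a c w + (2 : ℂ) • tp e2 u a) + tp a u a = 0 := by
    have : w - (2 : ℂ) • tp e c w + tp e u e
        = (w - (2 : ℂ) • tp e2 c w + tp e2 u e2)
          + (-(2 : ℂ) • tp a c w + (2 : ℂ) • tp e2 u a) + tp a u a := by
      rw [hecw, heue]; module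
    rw [← this]
    exact hBw
  obtain ⟨h2, _, h0⟩ := jbt_sep c _ _ _ hX2 hX1 hX0 hsplit
  exact ⟨h2, h0⟩

end JBTAux4

/-- Let `c` and `e` be tripotents in a `JB*`-triple `V`.  Then `c ≤ e` if and only if
`B(e,c)w = 0` for every `w` in the Peirce 2-space `V₂(c)`, where
`B(e,c)w = w − 2{e,c,w} + {e,{c,w,c},e}` is the Bergman operator. -/
theorem stmt11 {V : Type*} [NormedAddCommGroup V] [NormedSpace ℂ V] [JBStarTriple V]
    (c e : V) (hc : IsTripotent c) (he : IsTripotent e) :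
    TripLE c e ↔
      ∀ w ∈ Peirce2 c, w - (2 : ℂ) • tp e c w + tp e (tp c w c) e = 0 := by
  have hc' : tp c c c = c := hc
  have he' : tp e e e = e := he
  constructor
  · -- easy direction
    rintro ⟨ht, ho⟩ w hw
    have hw' : tp c c w = w := hw
    have hDd : tp c c (e - c) = 0 := by rw [symm_outer]; exact ho c
    have ho2 := jbt_o2 c hc' (e - c) hDd
    have ho4 := jbt_o4 c hc' (e - c) hDd
    have he2 : c + (e - c) = e := by abel
    have hu : tp c c (tp c w c) = tp c w c := jbt_dq c hc' w
    have hQQ : tp c (tp c w c) c = w := by rw [jbt_qq c hc' w, hw', hw']; module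
    have h1 : tp e c w = w := by
      rw [← he2, add_fst, hw', ho2 w, add_zero]
    have h2 : tp e (tp c w c) e = w := by
      rw [← he2, add_fst, tp3_add, tp3_add]
      rw [ho4 (tp c w c) c hu, ho4 (tp c w c) (e - c) hu]
      rw [symm_outer c (tp c w c) (e - c), ho4 (tp c w c) c hu, hQQ]
      module
    rw [h1, h2]
    module
  · -- hard direction
    intro H
    have hcube := jbt_cubic c hc' e
    obtain ⟨e2, he2def⟩ : ∃ t : V, t = (2 : ℂ) • tp c c (tp c c e) - tp c c e := ⟨_, rfl⟩
    obtain ⟨a, hadef⟩ : ∃ t : V, t = (4 : ℂ) • tp c c e - (4 : ℂ) • tp c c (tp c c e) := ⟨_, rfl⟩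
    obtain ⟨b, hbdef⟩ : ∃ t : V,
        t = e - (3 : ℂ) • tp c c e + (2 : ℂ) • tp c c (tp c c e) := ⟨_, rfl⟩
    have hsum : e = e2 + a + b := by rw [he2def, hadef, hbdef]; module
    have hDe2 : tp c c e2 = e2 := by
      rw [he2def, tp3_sub, tp3_smul, hcube]; module
    have hDa : tp c c a = (2⁻¹ : ℂ) • a := by
      rw [hadef, tp3_sub, tp3_smul, tp3_smul]
      calc (4 : ℂ) • tp c c (tp c c e) - (4 : ℂ) • tp c c (tp c c (tp c c e))
          = (4 : ℂ) • tp c c (tp c c e)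
              - (2 : ℂ) • ((2 : ℂ) • tp c c (tp c c (tp c c e))) := by module
        _ = (4 : ℂ) • tp c c (tp c c e)
              - (2 : ℂ) • ((3 : ℂ) • tp c c (tp c c e) - tp c c e) := by rw [hcube]
        _ = (2⁻¹ : ℂ) • ((4 : ℂ) • tp c c e - (4 : ℂ) • tp c c (tp c c e)) := by module
    have hDb : tp c c b = 0 := by
      rw [hbdef, tp3_add, tp3_sub, tp3_smul, tp3_smul, hcube]; module
    have hQa : tp c a c = 0 := by
      rw [hadef, tp2_sub, tp2_smul_num, tp2_smul_num, jbt_qd c hc' (tp c c e), jbt_qd c hc' e]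
      rw [sub_self]
    have hQb : tp c b c = 0 := by
      rw [hbdef, add_snd, tp2_sub, tp2_smul_num, tp2_smul_num,
        jbt_qd c hc' (tp c c e), jbt_qd c hc' e]
      module
    have hb2 := jbt_o2 c hc' b hDb
    have hb3 := jbt_o3 c hc' b hDb
    have hb4 := jbt_o4 c hc' b hDb
    -- component extraction at w = c
    obtain ⟨hX2c, hstar0⟩ :=
      jbt_comp c e e2 a b hc' hsum hDe2 hDa hb2 hb4 c hc' (H c hc')
    rw [hc'] at hX2c hstar0
    -- hX2c : c - 2 • tp e2 c c + tp e2 c e2 = 0 ; hstar0 : tp a c a = 0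
    -- ===== kill v := e2 - c =====
    obtain ⟨v, hvdef⟩ : ∃ t : V, t = e2 - c := ⟨_, rfl⟩
    have he2v : e2 = c + v := by rw [hvdef]; abel
    have hDv : tp c c v = v := by rw [hvdef, tp3_sub, hDe2, hc']
    have hvcc : tp v c c = v := by rw [symm_outer v c c]; exact hDv
    have hcvv : tp c v v = tp v v c := symm_outer c v v
    have he2cc : tp e2 c c = e2 := by rw [symm_outer e2 c c, hDe2]
    have hex : tp e2 c e2 = c + (2 : ℂ) • v + tp v c v := by
      rw [he2v]
      simp only [add_fst, tp3_add]
      rw [hc', hDv, hvcc]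
      module
    rw [he2cc, hex, he2v] at hX2c
    -- hX2c : c - 2 • (c + v) + (c + 2 • v + tp v c v) = 0
    have hDs : tp c c (tp v v c) = tp v v c := by
      have j := jordan_identity c c v v c
      rw [hDv, hc'] at j
      rw [j]; module
    have hQs : tp c (tp v v c) c = tp v v c := by
      have m := jbt_mid v v c c c
      rw [hc', symm_outer (tp v v c) c c, hDs] at m
      rw [m]; module
    have hvcqv : tp v c (tp c v c) = tp v v c := by
      have j := jordan_identity v c c v c
      rw [hvcc, hcvv, hQs] at j
      rw [j]; module
    have hQQv : tp c (tp c v c) c = v := by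
      rw [jbt_qq c hc' v, hDv, hDv]; module
    have hA : tp e2 c (tp c v c) = tp c v c + tp v v c := by
      rw [he2v, add_fst, jbt_dq c hc' v, hvcqv]
    have hB : tp e2 v e2 = tp c v c + (2 : ℂ) • tp v v c + tp v v v := by
      rw [he2v]
      simp only [add_fst, tp3_add]
      rw [hcvv]
      module
    obtain ⟨hX2q, _⟩ := jbt_comp c e e2 a b hc' hsum hDe2 hDa hb2 hb4
      (tp c v c) (jbt_dq c hc' v) (H (tp c v c) (jbt_dq c hc' v))
    rw [hQQv, hA, hB] at hX2q
    -- hX2q : tp c v c - 2 • (tp c v c + tp v v c) + (tp c v c + 2 • tp v v c + tp v v v) = 0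
    have hvvv : tp v v v = 0 := by
      calc tp v v v
          = tp c v c - (2 : ℂ) • (tp c v c + tp v v c)
              + (tp c v c + (2 : ℂ) • tp v v c + tp v v v) := by module
        _ = 0 := hX2q
    have hv0 : v = 0 := jbt_anis v hvvv
    have he2c : e2 = c := by rw [he2v, hv0, add_zero]
    have hsum' : e = c + a + b := by rw [← he2c]; exact hsum
    -- ===== kill a =====
    have haccc : tp a c c = (2⁻¹ : ℂ) • a := by rw [symm_outer a c c]; exact hDa
    have habc : tp a b c = 0 := by
      have j := jordan_identity c c a b c
      rw [hDa, hDb, hc', smul_fst, tp2_zero] at j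
      have h32 : tp c c (tp a b c) = ((3 : ℂ)/2) • tp a b c := by rw [j]; module
      exact jbt_kill c hc' ((3 : ℂ)/2) (by norm_num) _ h32
    have hacb : tp a c b = 0 := by
      have j := jordan_identity c c a c b
      rw [hDa, hc', hDb, smul_fst, tp3_zero] at j
      have hm : tp c c (tp a c b) = (-(2⁻¹ : ℂ)) • tp a c b := by rw [j]; module
      exact jbt_kill c hc' (-(2⁻¹ : ℂ)) (by norm_num) _ hm
    have hbab : tp b a b = 0 := by
      have j := jordan_identity c c b a b
      rw [hDb, hDa, tp1_zero, tp2_smul_half, tp3_zero] at j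
      have hm : tp c c (tp b a b) = (-(2⁻¹ : ℂ)) • tp b a b := by rw [j]; module
      exact jbt_kill c hc' (-(2⁻¹ : ℂ)) (by norm_num) _ hm
    -- derivation facts
    have hDg : tp c c (tp a a c) = tp a a c := by
      have j := jordan_identity c c a a c
      rw [hDa, hc', smul_fst, tp2_smul_half] at j
      rw [j]; module
    have hDm : tp c c (tp a b a) = tp a b a := by
      have j := jordan_identity c c a b a
      rw [hDa, hDb, smul_fst, tp2_zero, tp3_smul] at j
      rw [j]; module
    have hDh : tp c c (tp c a b) = (2⁻¹ : ℂ) • tp c a b := by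
      have j := jordan_identity c c c a b
      rw [hc', hDa, hDb, tp2_smul_half, tp3_zero] at j
      rw [j]; module
    have hDn : tp c c (tp a a a) = (2⁻¹ : ℂ) • tp a a a := by
      have j := jordan_identity c c a a a
      rw [hDa, smul_fst, tp2_smul_half, tp3_smul] at j
      rw [j]; module
    have hDk : tp c c (tp a a b) = 0 := by
      have j := jordan_identity c c a a b
      rw [hDa, hDb, smul_fst, tp2_smul_half, tp3_zero] at j
      rw [j]; module
    have hDj : tp c c (tp a b b) = (2⁻¹ : ℂ) • tp a b b := by
      have j := jordan_identity c c a b b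
      rw [hDa, hDb, smul_fst, tp2_zero, tp3_zero] at j
      rw [j]; module
    have hDβ : tp c c (tp b b b) = 0 := by
      have j := jordan_identity c c b b b
      rw [hDb, tp1_zero, tp2_zero, tp3_zero] at j
      rw [j]; module
    -- Q_e c = c + a
    have hQec : tp e c e = c + a := by
      rw [hsum']
      simp only [add_fst, tp3_add]
      rw [hc', hDa, haccc, hDb, hb2 c, hstar0, hacb, hb2 a, hb2 b]
      module
    have hCA : tp e e c + tp e e a = c + a := by
      have hDQe := jbt_dq e he' c
      rw [hQec, tp3_add] at hDQe
      exact hDQe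
    have hDec : tp e e c = c + (2⁻¹ : ℂ) • a + tp a a c + tp c a b := by
      rw [hsum']
      simp only [add_fst, add_snd]
      rw [hc', hQa, hQb, haccc, habc, hb2 c, symm_outer b a c,
        show tp b b c = 0 from by rw [symm_outer b b c]; exact hb3 b]
      module
    have hDea : tp e e a
        = (2⁻¹ : ℂ) • a + tp a a c + tp a a a + tp a b a + tp a a b + tp a b b := by
      rw [hsum']
      simp only [add_fst, add_snd]
      rw [hDa, symm_outer c a a, hb3 a, hstar0, hb2 a, symm_outer b a a, symm_outer b b a]
      module
    have hCAc := hCA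
    rw [hDec, hDea] at hCAc
    have hEQ1 : ((2 : ℂ) • tp a a c + tp a b a)
        + (tp c a b + tp a a a + tp a b b) + tp a a b = 0 := by
      calc ((2 : ℂ) • tp a a c + tp a b a) + (tp c a b + tp a a a + tp a b b) + tp a a b
          = ((c + (2⁻¹ : ℂ) • a + tp a a c + tp c a b)
              + ((2⁻¹ : ℂ) • a + tp a a c + tp a a a + tp a b a + tp a a b + tp a b b))
            - (c + a) := by module
        _ = 0 := by rw [hCAc]; exact sub_self _
    have hmem2 : tp c c ((2 : ℂ) • tp a a c + tp a b a) = (2 : ℂ) • tp a a c + tp a b a := by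
      rw [tp3_add, tp3_smul, hDg, hDm]
    have hmem1 : tp c c (tp c a b + tp a a a + tp a b b)
        = (2⁻¹ : ℂ) • (tp c a b + tp a a a + tp a b b) := by
      rw [tp3_add, tp3_add, hDh, hDn, hDj]; module
    obtain ⟨-, hS1, -⟩ := jbt_sep c _ _ _ hmem2 hmem1 hDk hEQ1
    -- second tripotency component
    have hexp : tp e e c + tp e e a + tp e e b = e := by
      rw [← tp3_add, ← tp3_add, ← hsum']; exact he'
    have hteeb : tp e e b = b := by
      calc tp e e b = (tp e e c + tp e e a + tp e e b) - (tp e e c + tp e e a) := by abel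
        _ = e - (c + a) := by rw [hexp, hCA]
        _ = b := by rw [hsum']; abel
    have hDeb : tp e e b = tp c a b + tp a a b + tp a b b + tp b b b := by
      rw [hsum']
      simp only [add_fst, add_snd]
      rw [hDb, hb3 b, hacb, hb2 b, hbab]
      module
    rw [hDeb] at hteeb
    have hsum0 : (0 : V) + (tp c a b + tp a b b) + (tp a a b + tp b b b - b) = 0 := by
      calc (0 : V) + (tp c a b + tp a b b) + (tp a a b + tp b b b - b)
          = (tp c a b + tp a a b + tp a b b + tp b b b) - b := by module
        _ = 0 := by rw [hteeb]; exact sub_self b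
    have hmemb1 : tp c c (tp c a b + tp a b b) = (2⁻¹ : ℂ) • (tp c a b + tp a b b) := by
      rw [tp3_add, hDh, hDj]; module
    have hmemb0 : tp c c (tp a a b + tp b b b - b) = 0 := by
      rw [tp3_sub, tp3_add, hDk, hDβ, hDb]; module
    obtain ⟨-, hS2, hS0⟩ := jbt_sep c _ _ _ (by rw [tp3_zero]) hmemb1 hmemb0 hsum0
    have hn : tp a a a = 0 := by
      calc tp a a a
          = (tp c a b + tp a a a + tp a b b) - (tp c a b + tp a b b) := by abel
        _ = 0 - 0 := by rw [hS1, hS2]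
        _ = 0 := by simp
    have ha0 : a = 0 := jbt_anis a hn
    have hβb : tp b b b = b := by
      have h := hS0
      rw [ha0, tp1_zero, zero_add] at h
      exact sub_eq_zero.mp h
    have heb : e - c = b := by rw [hsum', ha0]; abel
    refine ⟨?_, ?_⟩
    · show tp (e - c) (e - c) (e - c) = e - c
      rw [heb]; exact hβb
    · intro x
      show tp (e - c) c x = 0
      rw [heb]; exact hb2 x
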